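/- Let A and B be positive elements of a unital C*-algebra. Then (A+B)^{1/2} ≥ 2^{-1/2}(A^{1/2} + B^{1/2}), and more generally for every positive integer k one has (A+B)^{1/2^k} ≥ 2^{-1+2^{-k}}(A^{1/2^k} + B^{1/2^k}), where fractional powers of positive elements are defined by the continuous functional calculus and ≥ is the order induced by the positive cone. -/

import Mathlib

open scoped NNReal
set_option linter.unusedSectionVars false

section Helpers

variable {A : Type*} [CStarAlgebra A] [PartialOrder A] [StarOrderedRing A]

private lemma stmt5_sr_comm (u v : A) :
    spectralRadius ℝ (u * v) = spectralRadius ℝ (v * u) := by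
  have key : ∀ x y : A, spectralRadius ℝ (x * y) ≤ spectralRadius ℝ (y * x) := by
    intro x y
    rw [spectralRadius, spectralRadius]
    refine iSup₂_le fun k hk => ?_
    rcases eq_or_ne k 0 with rfl | hk0
    · simp
    · have : k ∈ spectrum ℝ (y * x) := by
        have := spectrum.nonzero_mul_comm (𝕜 := ℝ) x y
        have hmem : k ∈ spectrum ℝ (x * y) \ {0} := ⟨hk, hk0⟩
        rw [this] at hmem
        exact hmem.1
      exact le_iSup₂ (f := fun k (_ : k ∈ spectrum ℝ (y * x)) => (‖k‖₊ : ENNReal)) k this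
  exact le_antisymm (key u v) (key v u)

private lemma stmt5_sqrt_le_sqrt_of_isUnit {a b : A} (ha : 0 ≤ a) (hb : 0 ≤ b) (hbu : IsUnit b)
    (hab : a ≤ b) : CFC.sqrt a ≤ CFC.sqrt b := by
  rcases subsingleton_or_nontrivial A with hsub | hnt
  · exact le_of_eq (Subsingleton.elim _ _)
  have hb0 : 0 ∉ spectrum ℝ≥0 b := spectrum.zero_notMem ℝ≥0 hbu
  have hsb : (0:A) ≤ CFC.sqrt b := CFC.sqrt_nonneg b
  have hsa : (0:A) ≤ CFC.sqrt a := CFC.sqrt_nonneg a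
  have hsbu : IsUnit (CFC.sqrt b) := by
    rw [CFC.sqrt_eq_rpow]
    exact isUnit_iff_exists.mpr ⟨b ^ (-(1/2) : ℝ),
      CFC.rpow_mul_rpow_neg _ (hbu.isStrictlyPositive hb), CFC.rpow_neg_mul_rpow _ (hbu.isStrictlyPositive hb)⟩
  have h1 : ‖CFC.sqrt a * b ^ (-(1/2) : ℝ)‖ ≤ 1 := (le_iff_norm_sqrt_mul_rpow a b ha (hbu.isStrictlyPositive hb)).mp hab
  rw [le_iff_norm_sqrt_mul_rpow _ _ hsa (hsbu.isStrictlyPositive hsb)]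
  set c : A := CFC.sqrt b ^ (-(1/2) : ℝ) with hc
  set s : A := CFC.sqrt (CFC.sqrt a) with hs
  have hcnn : (0:A) ≤ c := CFC.rpow_nonneg
  have hsnn : (0:A) ≤ s := CFC.sqrt_nonneg _
  have hss : s * s = CFC.sqrt a := CFC.sqrt_mul_sqrt_self _ hsa
  have hcc : c * c = b ^ (-(1/2) : ℝ) := by
    rw [hc, CFC.rpow_sqrt b _ hbu hb, ← CFC.rpow_add hbu]
    norm_num
  have hsq : ‖s * c‖ ^ 2 = ‖c * CFC.sqrt a * c‖ := by
    rw [sq, ← CStarRing.norm_star_mul_self, star_mul, IsSelfAdjoint.of_nonneg hcnn,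
      IsSelfAdjoint.of_nonneg hsnn]
    congr 1
    rw [← mul_assoc, mul_assoc c s s, hss]
  have hy : (0:A) ≤ c * CFC.sqrt a * c := conjugate_nonneg_of_nonneg hsa hcnn
  have hnorm : ‖c * CFC.sqrt a * c‖ ≤ 1 := by
    have h2 : (spectralRadius ℝ (c * CFC.sqrt a * c)).toReal = ‖c * CFC.sqrt a * c‖ :=
      IsSelfAdjoint.toReal_spectralRadius_eq_norm (IsSelfAdjoint.of_nonneg hy)
    rw [← h2]
    have h3 : spectralRadius ℝ (c * CFC.sqrt a * c)
        = spectralRadius ℝ (CFC.sqrt a * b ^ (-(1/2) : ℝ)) := by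
      calc spectralRadius ℝ (c * CFC.sqrt a * c)
          = spectralRadius ℝ (c * (CFC.sqrt a * c)) := by rw [mul_assoc]
        _ = spectralRadius ℝ (CFC.sqrt a * c * c) := by rw [stmt5_sr_comm, mul_assoc]
        _ = _ := by rw [mul_assoc, hcc]
    rw [h3]
    calc (spectralRadius ℝ (CFC.sqrt a * b ^ (-(1/2) : ℝ))).toReal
        ≤ (‖CFC.sqrt a * b ^ (-(1/2) : ℝ)‖₊ : ENNReal).toReal := by
          gcongr
          · exact ENNReal.coe_ne_top
          · exact spectrum.spectralRadius_le_nnnorm (𝕜 := ℝ) _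
      _ ≤ 1 := by simpa using h1
  have : ‖s * c‖ ^ 2 ≤ 1 := hsq ▸ hnorm
  nlinarith [norm_nonneg (s * c)]

private lemma stmt5_nnsqrt_add_le (x y : ℝ≥0) :
    NNReal.sqrt (x + y) ≤ NNReal.sqrt x + NNReal.sqrt y := by
  have h2 : x + y ≤ (NNReal.sqrt x + NNReal.sqrt y)^2 := by
    rw [add_sq, NNReal.sq_sqrt, NNReal.sq_sqrt]
    exact add_le_add_left (le_add_right le_rfl) _
  simpa using NNReal.sqrt_le_sqrt.mpr h2

private lemma stmt5_sqrt_shift {b : A} (hb : 0 ≤ b) (ε : ℝ≥0) :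
    CFC.sqrt (b + algebraMap ℝ≥0 A ε) = cfc (fun t : ℝ≥0 => NNReal.sqrt (t + ε)) b := by
  have h1 : b + algebraMap ℝ≥0 A ε = cfc (fun t : ℝ≥0 => t + ε) b := by
    rw [cfc_add b (fun t : ℝ≥0 => t) (fun _ : ℝ≥0 => ε) (by fun_prop) (by fun_prop),
      cfc_id' ℝ≥0 b, cfc_const ε b]
  rw [h1, CFC.sqrt_eq_cfc,
    ← cfc_comp' NNReal.sqrt (fun t : ℝ≥0 => t + ε) b (by fun_prop) (by fun_prop)]

private lemma stmt5_norm_sqrt_shift_sub {b : A} (hb : 0 ≤ b) (ε : ℝ≥0) :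
    ‖CFC.sqrt (b + algebraMap ℝ≥0 A ε) - CFC.sqrt b‖₊ ≤ NNReal.sqrt ε := by
  have hle : ∀ x ∈ spectrum ℝ≥0 b, NNReal.sqrt x ≤ NNReal.sqrt (x + ε) := fun x _ =>
    NNReal.sqrt_le_sqrt.mpr (le_add_of_nonneg_right (zero_le : (0:ℝ≥0) ≤ ε))
  have key : CFC.sqrt (b + algebraMap ℝ≥0 A ε) - CFC.sqrt b
      = cfc (fun t : ℝ≥0 => NNReal.sqrt (t + ε) - NNReal.sqrt t) b := by
    rw [cfc_tsub _ _ b hle hb (by fun_prop) (by fun_prop), stmt5_sqrt_shift hb, CFC.sqrt_eq_cfc]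
  rw [key]
  refine nnnorm_cfc_nnreal_le fun x _ => ?_
  exact tsub_le_iff_left.mpr (by simpa [add_comm] using stmt5_nnsqrt_add_le x ε)

private lemma stmt5_algebraMap_nnreal_nonneg (ε : ℝ≥0) : (0:A) ≤ algebraMap ℝ≥0 A ε := by
  rw [Algebra.algebraMap_eq_smul_one]
  calc (0:A) = ε • (0:A) := by simp
  _ ≤ ε • 1 := smul_le_smul_of_nonneg_left zero_le_one (zero_le : (0:ℝ≥0) ≤ ε)

open Filter Topology in
private lemma stmt5_sqrt_le_sqrt {a b : A} (ha : 0 ≤ a) (hab : a ≤ b) :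
    CFC.sqrt a ≤ CFC.sqrt b := by
  have hb : 0 ≤ b := ha.trans hab
  set ε : ℕ → ℝ≥0 := fun n => ((n:ℝ≥0)+1)⁻¹ with hε
  have hεpos : ∀ n, ε n ≠ 0 := fun n => by positivity
  set f : ℕ → A := fun n => CFC.sqrt (b + algebraMap ℝ≥0 A (ε n)) - CFC.sqrt a with hf
  have hfn : ∀ n, 0 ≤ f n := by
    intro n
    have h0 : (0:A) ≤ algebraMap ℝ≥0 A (ε n) := stmt5_algebraMap_nnreal_nonneg _
    have hbε : 0 ≤ b + algebraMap ℝ≥0 A (ε n) := add_nonneg hb h0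
    have hu : IsUnit (b + algebraMap ℝ≥0 A (ε n)) := by
      refine CStarAlgebra.isUnit_of_le _ (le_add_of_nonneg_left hb) (IsUnit.isStrictlyPositive ?_ h0)
      exact (isUnit_iff_ne_zero.mpr (hεpos n)).map (algebraMap ℝ≥0 A)
    have haε : a ≤ b + algebraMap ℝ≥0 A (ε n) := hab.trans (le_add_of_nonneg_right h0)
    exact sub_nonneg.mpr (stmt5_sqrt_le_sqrt_of_isUnit ha hbε hu haε)
  have htend : Tendsto f atTop (𝓝 (CFC.sqrt b - CFC.sqrt a)) := by
    refine Tendsto.sub_const ?_ _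
    rw [tendsto_iff_norm_sub_tendsto_zero]
    refine squeeze_zero (g := fun n => (NNReal.sqrt (ε n) : ℝ)) (fun n => norm_nonneg _)
      (fun n => ?_) ?_
    · exact stmt5_norm_sqrt_shift_sub hb (ε n)
    · have h1 : Tendsto (fun n : ℕ => ((n:ℝ)+1)⁻¹) atTop (𝓝 0) := by
        simpa [one_div] using (tendsto_one_div_add_atTop_nhds_zero_nat :
          Tendsto (fun n : ℕ => 1 / ((n:ℝ) + 1)) atTop (𝓝 0))
      have h2 := (Real.continuous_sqrt.tendsto' 0 0 Real.sqrt_zero).comp h1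
      convert h2 using 2 with n
      simp only [Function.comp, hε, Real.coe_sqrt]
      push_cast
      norm_num
  have := CStarAlgebra.isClosed_nonneg (A := A) |>.mem_of_tendsto htend
    (Filter.Eventually.of_forall hfn)
  exact sub_nonneg.mp this

private lemma stmt5_sqrt_nnsmul (r : ℝ≥0) {c : A} (hc : 0 ≤ c) :
    CFC.sqrt (r • c) = NNReal.sqrt r • CFC.sqrt c := by
  have h1 : r • c = cfc (fun t : ℝ≥0 => r • t) c := by
    conv_lhs => rw [← cfc_id' ℝ≥0 c]
    exact (cfc_smul r (id : ℝ≥0 → ℝ≥0) c).symm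
  rw [h1, CFC.sqrt_eq_cfc,
    ← cfc_comp' NNReal.sqrt (fun t : ℝ≥0 => r • t) c (by fun_prop) (by fun_prop)]
  rw [cfc_congr (g := fun t : ℝ≥0 => NNReal.sqrt r • NNReal.sqrt t)
      (fun t _ => by simp [smul_eq_mul, NNReal.sqrt_mul]),
    cfc_smul (NNReal.sqrt r) NNReal.sqrt c, CFC.sqrt_eq_cfc]

private lemma stmt5_sqrt_smul_real {r : ℝ} (hr : 0 ≤ r) {c : A} (hc : 0 ≤ c) :
    CFC.sqrt (r • c) = Real.sqrt r • CFC.sqrt c := by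
  have h1 : r • c = r.toNNReal • c := by
    rw [NNReal.smul_def, Real.coe_toNNReal _ hr]
  rw [h1, stmt5_sqrt_nnsmul _ hc, NNReal.smul_def, Real.coe_sqrt, Real.coe_toNNReal _ hr]

private lemma stmt5_smul_nonneg_real {r : ℝ} (hr : 0 ≤ r) {c : A} (hc : 0 ≤ c) :
    (0:A) ≤ r • c := by
  calc (0:A) = r • (0:A) := by simp
  _ ≤ r • c := smul_le_smul_of_nonneg_left hc hr

private lemma stmt5_key_base {a b : A} (ha : 0 ≤ a) (hb : 0 ≤ b) :
    CFC.sqrt a + CFC.sqrt b ≤ Real.sqrt 2 • CFC.sqrt (a + b) := by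
  set x := CFC.sqrt a with hx
  set y := CFC.sqrt b with hy
  have hxnn : (0:A) ≤ x := CFC.sqrt_nonneg a
  have hynn : (0:A) ≤ y := CFC.sqrt_nonneg b
  have hxx : x * x = a := CFC.sqrt_mul_sqrt_self a ha
  have hyy : y * y = b := CFC.sqrt_mul_sqrt_self b hb
  have hcross : x * y + y * x ≤ x * x + y * y := by
    have h0 : (0:A) ≤ star (x - y) * (x - y) := star_mul_self_nonneg _
    have hsxy : star (x - y) = x - y := by
      rw [star_sub, IsSelfAdjoint.of_nonneg hxnn, IsSelfAdjoint.of_nonneg hynn]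
    rw [hsxy] at h0
    have : (x - y) * (x - y) = x * x + y * y - (x * y + y * x) := by noncomm_ring
    rw [this, sub_nonneg] at h0
    exact h0
  have hcross' : x * y + y * x ≤ a + b := by rwa [hxx, hyy] at hcross
  have hsq : (x + y) * (x + y) ≤ (2 : ℝ≥0) • (a + b) := by
    have hexp : (x + y) * (x + y) = (x * x + y * y) + (x * y + y * x) := by noncomm_ring
    rw [hexp, hxx, hyy, two_smul]
    exact add_le_add_right hcross' _
  have hxy : (0:A) ≤ x + y := add_nonneg hxnn hynn
  have hprod : (0:A) ≤ (x + y) * (x + y) := by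
    have := star_mul_self_nonneg (x + y)
    rwa [IsSelfAdjoint.of_nonneg hxy] at this
  have hmono := stmt5_sqrt_le_sqrt hprod hsq
  rw [CFC.sqrt_mul_self (x + y) hxy, stmt5_sqrt_nnsmul 2 (add_nonneg ha hb)] at hmono
  refine hmono.trans_eq ?_
  rw [NNReal.smul_def, Real.coe_sqrt]
  norm_num

private lemma stmt5_main_ind {a b : A} (ha : 0 ≤ a) (hb : 0 ≤ b) (k : ℕ) :
    ((2:ℝ) ^ (-1 + (2:ℝ) ^ (-(k:ℝ)))) •
      (CFC.rpow a ((2:ℝ) ^ (-(k:ℝ))) + CFC.rpow b ((2:ℝ) ^ (-(k:ℝ))))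
      ≤ CFC.rpow (a + b) ((2:ℝ) ^ (-(k:ℝ))) := by
  induction k with
  | zero =>
    simp only [Nat.cast_zero, neg_zero, Real.rpow_zero, neg_add_cancel, CFC.rpow_eq_pow]
    rw [CFC.rpow_one a ha, CFC.rpow_one b hb, CFC.rpow_one (a+b) (add_nonneg ha hb)]
    simp
  | succ k ih =>
    set e : ℝ := (2:ℝ) ^ (-(k:ℝ)) with he
    set e' : ℝ := (2:ℝ) ^ (-((k+1:ℕ):ℝ)) with he'
    have h2 : (0:ℝ) < 2 := two_pos
    have hee : e' = e / 2 := by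
      rw [he', he]
      push_cast
      rw [show -((k:ℝ)+1) = -(k:ℝ) + (-1) by ring, Real.rpow_add h2, Real.rpow_neg_one]
      ring
    set c : ℝ := (2:ℝ) ^ (-1 + e) with hc
    set c' : ℝ := (2:ℝ) ^ (-1 + e') with hc'
    have hcpos : 0 < c := Real.rpow_pos_of_pos h2 _
    have hc'pos : 0 < c' := Real.rpow_pos_of_pos h2 _
    have hepos : 0 < e := Real.rpow_pos_of_pos h2 _
    have hscalar : Real.sqrt c = c' * Real.sqrt 2 := by
      rw [hc, hc', Real.sqrt_eq_rpow, Real.sqrt_eq_rpow, ← Real.rpow_mul h2.le,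
        ← Real.rpow_add h2]
      congr 1
      rw [hee]
      ring
    set X := CFC.rpow a e with hX
    set Y := CFC.rpow b e with hY
    have hXnn : (0:A) ≤ X := CFC.rpow_nonneg
    have hYnn : (0:A) ≤ Y := CFC.rpow_nonneg
    have hXYnn : (0:A) ≤ X + Y := add_nonneg hXnn hYnn
    have hx : (((2:ℝ≥0) ^ (-(k:ℝ)) : ℝ≥0) : ℝ) = e := by
      rw [NNReal.coe_rpow, he]
      norm_num
    have hsqrt_rpow : ∀ (w : A), CFC.sqrt (CFC.rpow w e) = CFC.rpow w e' := by
      intro w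
      have := CFC.sqrt_rpow_nnreal (a := w) (x := (2:ℝ≥0) ^ (-(k:ℝ)))
      simp only [CFC.rpow_eq_pow] at this ⊢
      rw [hx] at this
      rw [this, hee]
    calc c' • (CFC.rpow a e' + CFC.rpow b e')
        = c' • (CFC.sqrt X + CFC.sqrt Y) := by rw [hsqrt_rpow a, hsqrt_rpow b]
      _ ≤ c' • (Real.sqrt 2 • CFC.sqrt (X + Y)) :=
          smul_le_smul_of_nonneg_left (stmt5_key_base hXnn hYnn) hc'pos.le
      _ = (c' * Real.sqrt 2) • CFC.sqrt (X + Y) := by rw [smul_smul]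
      _ = Real.sqrt c • CFC.sqrt (X + Y) := by rw [hscalar]
      _ = CFC.sqrt (c • (X + Y)) := (stmt5_sqrt_smul_real hcpos.le hXYnn).symm
      _ ≤ CFC.sqrt (CFC.rpow (a + b) e) :=
          stmt5_sqrt_le_sqrt (stmt5_smul_nonneg_real hcpos.le hXYnn) ih
      _ = CFC.rpow (a + b) e' := hsqrt_rpow (a + b)

private lemma stmt5_bridge {x : A} (hx : 0 ≤ x) {r : ℝ} (hr : 0 < r) :
    cfc (fun t : ℝ => t ^ r) x = CFC.rpow x r := by
  rw [show CFC.rpow x r = cfc (fun t : ℝ≥0 => t ^ r) x from rfl, cfc_nnreal_eq_real _ _ hx]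
  refine cfc_congr fun t ht => ?_
  have ht0 : 0 ≤ t := spectrum_nonneg_of_nonneg hx ht
  rw [NNReal.coe_rpow, Real.coe_toNNReal _ ht0]

end Helpers

/-- Lemma 3.6: for positive elements `A, B` of a unital C*-algebra,
`(A+B)^{1/2} ≥ 2^{-1/2}(A^{1/2} + B^{1/2})` and, for every positive integer `k`,
`(A+B)^{1/2^k} ≥ 2^{-1+2^{-k}}(A^{1/2^k} + B^{1/2^k})`. -/
theorem stmt_5 {A : Type*} [CStarAlgebra A] [PartialOrder A] [StarOrderedRing A]
    (a b : A) (ha : 0 ≤ a) (hb : 0 ≤ b) :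
    ((2 : ℝ) ^ (-(1 : ℝ) / 2)) •
        (cfc (fun t : ℝ => t ^ ((1 : ℝ) / 2)) a + cfc (fun t : ℝ => t ^ ((1 : ℝ) / 2)) b) ≤
      cfc (fun t : ℝ => t ^ ((1 : ℝ) / 2)) (a + b) ∧
    ∀ k : ℕ, 1 ≤ k →
      ((2 : ℝ) ^ (-1 + (2 : ℝ) ^ (-(k : ℝ)))) •
          (cfc (fun t : ℝ => t ^ ((1 : ℝ) / 2 ^ k)) a
            + cfc (fun t : ℝ => t ^ ((1 : ℝ) / 2 ^ k)) b) ≤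
        cfc (fun t : ℝ => t ^ ((1 : ℝ) / 2 ^ k)) (a + b) := by
  have hab : 0 ≤ a + b := add_nonneg ha hb
  have main : ∀ k : ℕ,
      ((2 : ℝ) ^ (-1 + (2 : ℝ) ^ (-(k : ℝ)))) •
        (cfc (fun t : ℝ => t ^ ((1 : ℝ) / 2 ^ k)) a
          + cfc (fun t : ℝ => t ^ ((1 : ℝ) / 2 ^ k)) b) ≤
      cfc (fun t : ℝ => t ^ ((1 : ℝ) / 2 ^ k)) (a + b) := by
    intro k
    have hek : (1 : ℝ) / 2 ^ k = (2:ℝ) ^ (-(k:ℝ)) := by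
      rw [Real.rpow_neg (by norm_num), Real.rpow_natCast, one_div]
    have hpos : (0:ℝ) < (1 : ℝ) / 2 ^ k := by positivity
    rw [stmt5_bridge ha hpos, stmt5_bridge hb hpos, stmt5_bridge hab hpos, hek]
    exact stmt5_main_ind ha hb k
  constructor
  · have h1 := main 1
    have he : (1 : ℝ) / 2 ^ (1:ℕ) = (1:ℝ)/2 := by norm_num
    have hs : (-1 + (2 : ℝ) ^ (-((1:ℕ):ℝ))) = (-(1:ℝ)/2) := by
      rw [show -((1:ℕ):ℝ) = -1 by norm_num, Real.rpow_neg_one]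
      norm_num
    rw [he, hs] at h1
    exact h1
  · exact fun k _ => main k
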